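/- arXiv:1810.12413 — 2 statements merged into one kernel-verified Lean document; each statement's English description precedes it below -/
import Mathlib

section
/- Let M ≥ 2, let α ∈ R^M have Q-linearly independent coordinates, and let S = {k_0, k_1, ..., k_N} ⊆ Z^M be a finite set indexed so that k_0^T α < k_1^T α < ... < k_N^T α. Define B(α, S) = {a ∈ Z^M : 2||S||_∞ < ν(a) and k_0^T a < k_1^T a < ... < k_N^T a}. Then B(α, S) is an infinite set. -/
def supNorm {M : ℕ} (b : Fin M → ℤ) : ℕ := Finset.univ.sup fun i => (b i).natAbs

lemma abs_coord_le {M : ℕ} (b : Fin M → ℤ) (i : Fin M) : |(b i : ℝ)| ≤ (supNorm b : ℝ) := by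
  have h := Finset.le_sup (f := fun i => (b i).natAbs) (Finset.mem_univ i)
  calc |(b i : ℝ)| = ((b i).natAbs : ℝ) := by rw [Nat.cast_natAbs, Int.cast_abs]
    _ ≤ (supNorm b : ℝ) := by exact_mod_cast h

lemma err_bound {M : ℕ} (α : Fin M → ℝ) (t : ℝ) (w : Fin M → ℤ) (R : ℕ) (hw : supNorm w ≤ R) :
    |(∑ i, (w i : ℝ) * (round (t * α i) : ℤ)) - t * ∑ i, (w i : ℝ) * α i| ≤ M * R / 2 := by
  have h1 : (∑ i, (w i : ℝ) * (round (t * α i) : ℤ)) - t * ∑ i, (w i : ℝ) * α i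
      = ∑ i, (w i : ℝ) * ((round (t * α i) : ℤ) - t * α i) := by
    rw [Finset.mul_sum, ← Finset.sum_sub_distrib]
    congr 1; ext i; ring
  rw [h1]
  calc |∑ i, (w i : ℝ) * ((round (t * α i) : ℤ) - t * α i)|
      ≤ ∑ i, |(w i : ℝ) * ((round (t * α i) : ℤ) - t * α i)| := Finset.abs_sum_le_sum_abs _ _
    _ ≤ ∑ _i : Fin M, (R : ℝ) * (1/2) := by
        apply Finset.sum_le_sum; intro i _
        rw [abs_mul]
        have h2 : |(w i : ℝ)| ≤ (R : ℝ) := le_trans (abs_coord_le w i) (by exact_mod_cast hw)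
        have h3 : |((round (t * α i) : ℤ) : ℝ) - t * α i| ≤ 1/2 := by rw [abs_sub_comm]; exact abs_sub_round (t * α i)
        exact mul_le_mul h2 h3 (abs_nonneg _) (Nat.cast_nonneg R)
    _ = M * R / 2 := by simp [Finset.sum_const]; ring

lemma finset_pos_lb (s : Finset ℝ) (h : ∀ x ∈ s, 0 < x) : ∃ δ > 0, ∀ x ∈ s, δ ≤ x := by
  refine ⟨(insert (1:ℝ) s).min' ⟨1, Finset.mem_insert_self _ _⟩, ?_, ?_⟩
  · have := Finset.min'_mem (insert (1:ℝ) s) ⟨1, Finset.mem_insert_self _ _⟩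
    rcases Finset.mem_insert.mp this with h1 | h1
    · rw [h1]; norm_num
    · exact h _ h1
  · exact fun x hx => Finset.min'_le _ _ (Finset.mem_insert_of_mem hx)

theorem B_alpha_S_infinite (M N : ℕ) (hM : 2 ≤ M) (α : Fin M → ℝ)
    (hα : LinearIndependent ℚ α) (k : Fin (N + 1) → Fin M → ℤ)
    (hk : StrictMono fun n => ∑ i, (k n i : ℝ) * α i) :
    Set.Infinite {a : Fin M → ℤ |
      (∀ b : Fin M → ℤ, b ≠ 0 → (∑ i, b i * a i) = 0 →
        2 * ((Finset.univ.image k).sup supNorm) < supNorm b) ∧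
      StrictMono fun n => ∑ i, k n i * a i} := by
  set C : ℕ := (Finset.univ.image k).sup supNorm with hC
  set v : Fin (N + 1) → ℝ := fun n => ∑ i, (k n i : ℝ) * α i with hv
  -- linear independence over ℤ coefficients
  have hind : ∀ b : Fin M → ℤ, (∑ i, (b i : ℝ) * α i) = 0 → b = 0 := by
    intro b hb
    have h0 : ∑ i, (b i : ℚ) • α i = 0 := by
      rw [← hb]; apply Finset.sum_congr rfl; intro i _; rw [Rat.smul_def]; push_cast; ring
    have := Fintype.linearIndependent_iff.mp hα (fun i => (b i : ℚ)) h0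
    funext i
    simp only [Pi.zero_apply]
    have h2 : ((b i : ℚ)) = 0 := this i
    exact_mod_cast h2
  -- finite set of small nonzero b's
  have hB2C : {b : Fin M → ℤ | b ≠ 0 ∧ supNorm b ≤ 2 * C}.Finite := by
    apply Set.Finite.subset (Set.Finite.pi (fun _ : Fin M => Set.finite_Icc (-(2 * C : ℤ)) (2 * C)))
    rintro b ⟨-, hb2⟩ i -
    have h1 : (b i).natAbs ≤ 2 * C :=
      le_trans (Finset.le_sup (f := fun i => (b i).natAbs) (Finset.mem_univ i)) hb2
    constructor <;> omega
  have hD : ((fun b => |∑ i, (b i : ℝ) * α i|) '' {b : Fin M → ℤ | b ≠ 0 ∧ supNorm b ≤ 2 * C}).Finite :=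
    hB2C.image _
  set G : Finset ℝ := (Finset.univ.filter (fun p : Fin (N + 1) × Fin (N + 1) => p.1 < p.2)).image
    (fun p => v p.2 - v p.1) with hG
  obtain ⟨δ, hδ0, hδ⟩ := finset_pos_lb (hD.toFinset ∪ G) (by
    intro x hx
    rcases Finset.mem_union.mp hx with h | h
    · rw [Set.Finite.mem_toFinset] at h
      obtain ⟨b, ⟨hb0, -⟩, rfl⟩ := h
      have : (∑ i, (b i : ℝ) * α i) ≠ 0 := fun h => hb0 (hind b h)
      exact abs_pos.mpr this
    · obtain ⟨p, hp, rfl⟩ := Finset.mem_image.mp h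
      exact sub_pos.mpr (hk (Finset.mem_filter.mp hp).2))
  -- key construction
  have key : ∀ n0 : ℕ, ∃ a : Fin M → ℤ, a ∈ {a : Fin M → ℤ |
      (∀ b : Fin M → ℤ, b ≠ 0 → (∑ i, b i * a i) = 0 → 2 * C < supNorm b) ∧
      StrictMono fun n => ∑ i, k n i * a i} ∧ n0 < supNorm a := by
    intro n0
    have hα0 : α ⟨0, by omega⟩ ≠ 0 := hα.ne_zero _
    set i0 : Fin M := ⟨0, by omega⟩
    set t : ℝ := max (max ((n0 + 1) / |α i0|) (((M : ℝ) * C + 1) / δ)) 1 with ht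
    have ht1 : t * |α i0| ≥ n0 + 1 := by
      rw [ge_iff_le, ← div_le_iff₀ (abs_pos.mpr hα0)]
      exact le_trans (le_max_left _ _) (le_max_left _ _)
    have ht2 : t * δ ≥ (M : ℝ) * C + 1 := by
      rw [ge_iff_le, ← div_le_iff₀ hδ0]
      exact le_trans (le_max_right _ _) (le_max_left _ _)
    have ht0 : 0 < t := lt_of_lt_of_le one_pos (le_max_right _ _)
    set a : Fin M → ℤ := fun i => round (t * α i) with ha
    -- error bound for each k n
    have hkC : ∀ n, supNorm (k n) ≤ C := fun n =>
      Finset.le_sup (Finset.mem_image_of_mem k (Finset.mem_univ n))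
    have herr : ∀ n, |(∑ i, ((k n) i : ℝ) * (a i : ℤ)) - t * v n| ≤ M * C / 2 := fun n =>
      err_bound α t (k n) C (hkC n)
    refine ⟨a, ⟨?_, ?_⟩, ?_⟩
    · -- orthogonality
      intro b hb0 hba
      by_contra hle
      push_neg at hle
      have hmem : |∑ i, (b i : ℝ) * α i| ∈ hD.toFinset ∪ G := by
        rw [Finset.mem_union, Set.Finite.mem_toFinset]
        exact Or.inl ⟨b, ⟨hb0, hle⟩, rfl⟩
      have hδb := hδ _ hmem
      have herrb := err_bound α t b (2 * C) hle
      push_cast at herrb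
      have hz : (∑ i, (b i : ℝ) * (a i : ℤ)) = 0 := by
        have : ((∑ i, b i * a i : ℤ) : ℝ) = 0 := by rw [hba]; norm_cast
        push_cast at this
        convert this using 2
      rw [hz, zero_sub, abs_neg, abs_mul, abs_of_pos ht0] at herrb
      have : (M : ℝ) * C + 1 ≤ t * |∑ i, (b i : ℝ) * α i| :=
        le_trans ht2 (by gcongr)
      nlinarith
    · -- strict monotonicity
      intro n m hnm
      have hmem : v m - v n ∈ hD.toFinset ∪ G := by
        rw [Finset.mem_union]
        exact Or.inr (Finset.mem_image.mpr ⟨(n, m), Finset.mem_filter.mpr ⟨Finset.mem_univ _, hnm⟩, rfl⟩)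
      have hgap := hδ _ hmem
      have h1 := herr n
      have h2 := herr m
      have : ((∑ i, k n i * a i : ℤ) : ℝ) < ((∑ i, k m i * a i : ℤ) : ℝ) := by
        push_cast
        have habs1 := abs_le.mp h1
        have habs2 := abs_le.mp h2
        have htmn : (M : ℝ) * C + 1 ≤ t * (v m - v n) := le_trans ht2 (by gcongr)
        nlinarith
      exact_mod_cast this
    · -- large sup norm
      have h1 : |((a i0 : ℤ) : ℝ)| ≥ (n0 : ℝ) + 1 / 2 := by
        have h2 : |t * α i0 - ((a i0 : ℤ) : ℝ)| ≤ 1 / 2 := abs_sub_round (t * α i0)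
        have h3 : |t * α i0| = t * |α i0| := by rw [abs_mul, abs_of_pos ht0]
        have h4 := abs_sub_abs_le_abs_sub (t * α i0) ((a i0 : ℤ) : ℝ)
        linarith [h4.trans h2, h3 ▸ ht1]
      have h5 : (n0 : ℝ) < ((a i0).natAbs : ℝ) := by
        rw [Nat.cast_natAbs, Int.cast_abs]
        linarith
      have h6 : n0 < (a i0).natAbs := by exact_mod_cast h5
      exact lt_of_lt_of_le h6 (Finset.le_sup (f := fun i => (a i).natAbs) (Finset.mem_univ i0))
  -- conclude infiniteness
  intro hfin
  obtain ⟨B, hB⟩ := (hfin.image supNorm).bddAbove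
  obtain ⟨a, haS, hna⟩ := key B
  exact absurd (hB (Set.mem_image_of_mem supNorm haS)) (not_le.mpr hna)
end

section
/- Let M ≥ 2, let α ∈ R^M have Q-linearly independent coordinates, and let S = {k_0, ..., k_N} ⊆ Z^M be indexed so that k_0^T α < ... < k_N^T α. Then the function ν is unbounded on the set B(α, S) = {a ∈ Z^M : 2||S||_∞ < ν(a) and k_0^T a < ... < k_N^T a}; that is, for every B > 0 there exists a ∈ B(α, S) with ν(a) > B. -/
lemma helper_pos {M : ℕ} (α : Fin M → ℝ) (V : Finset (Fin M → ℤ))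
    (hV : ∀ v ∈ V, 0 < ∑ i, (v i : ℝ) * α i) :
    ∃ a : Fin M → ℤ, ∀ v ∈ V, 0 < ∑ i, v i * a i := by
  rcases V.eq_empty_or_nonempty with h | h
  · exact ⟨0, by simp [h]⟩
  set δ := V.inf' h (fun v => ∑ i, (v i : ℝ) * α i) with hδdef
  have hδ : 0 < δ := (Finset.lt_inf'_iff h).mpr hV
  set K := V.sup' h (fun v => ∑ i, |(v i : ℝ)|) with hKdef
  have hK0 : 0 ≤ K := by
    obtain ⟨v₀, hv₀⟩ := h
    have h1 : ∑ i, |(v₀ i : ℝ)| ≤ K := Finset.le_sup' (fun v => ∑ i, |(v i : ℝ)|) hv₀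
    have h2 : (0:ℝ) ≤ ∑ i, |(v₀ i : ℝ)| := Finset.sum_nonneg fun i _ => abs_nonneg _
    linarith
  obtain ⟨Q, hQ⟩ := exists_nat_gt (K / δ)
  have hQδ : K < (Q : ℝ) * δ := by
    rw [div_lt_iff₀ hδ] at hQ; linarith
  refine ⟨fun i => round ((Q : ℝ) * α i), fun v hv => ?_⟩
  have key : (0 : ℝ) < ∑ i, (v i : ℝ) * (round ((Q : ℝ) * α i) : ℝ) := by
    have e : ∑ i, (v i : ℝ) * (round ((Q : ℝ) * α i) : ℝ)
        = (Q : ℝ) * (∑ i, (v i : ℝ) * α i)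
          + ∑ i, (v i : ℝ) * ((round ((Q : ℝ) * α i) : ℝ) - (Q : ℝ) * α i) := by
      rw [Finset.mul_sum, ← Finset.sum_add_distrib]
      exact Finset.sum_congr rfl fun i _ => by ring
    have herr : |∑ i, (v i : ℝ) * ((round ((Q : ℝ) * α i) : ℝ) - (Q : ℝ) * α i)|
        ≤ K / 2 := by
      calc |∑ i, (v i : ℝ) * ((round ((Q : ℝ) * α i) : ℝ) - (Q : ℝ) * α i)|
          ≤ ∑ i, |(v i : ℝ) * ((round ((Q : ℝ) * α i) : ℝ) - (Q : ℝ) * α i)| :=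
            Finset.abs_sum_le_sum_abs _ _
        _ ≤ ∑ i, |(v i : ℝ)| * (1 / 2) := by
            refine Finset.sum_le_sum fun i _ => ?_
            rw [abs_mul]
            refine mul_le_mul_of_nonneg_left ?_ (abs_nonneg _)
            rw [abs_sub_comm]
            exact abs_sub_round _
        _ = (∑ i, |(v i : ℝ)|) / 2 := by rw [← Finset.sum_mul]; ring
        _ ≤ K / 2 := by
            have := Finset.le_sup' (fun v => ∑ i, |(v i : ℝ)|) hv
            linarith
    have hvδ : δ ≤ ∑ i, (v i : ℝ) * α i := Finset.inf'_le _ hv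
    have hQ0 : (0 : ℝ) ≤ (Q : ℝ) := Nat.cast_nonneg _
    have h1 : (Q : ℝ) * δ ≤ (Q : ℝ) * (∑ i, (v i : ℝ) * α i) :=
      mul_le_mul_of_nonneg_left hvδ hQ0
    have h2 := abs_le.mp herr
    rw [e]; linarith
  have : (0 : ℝ) < ((∑ i, v i * round ((Q : ℝ) * α i) : ℤ) : ℝ) := by push_cast; exact key
  exact_mod_cast this

theorem nu_unbounded_on_B (M N : ℕ) (hM : 2 ≤ M) (α : Fin M → ℝ)
    (hα : LinearIndependent ℚ α) (k : Fin (N + 1) → Fin M → ℤ)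
    (hk : StrictMono fun n => ∑ i, (k n i : ℝ) * α i) :
    ∀ B : ℕ, ∃ a : Fin M → ℤ,
      ((∀ b : Fin M → ℤ, b ≠ 0 → (∑ i, b i * a i) = 0 →
          2 * ((Finset.univ.image k).sup supNorm) < supNorm b) ∧
        StrictMono fun n => ∑ i, k n i * a i) ∧
      (∀ b : Fin M → ℤ, b ≠ 0 → (∑ i, b i * a i) = 0 → B < supNorm b) := by
  intro B
  set C : ℕ := max (2 * ((Finset.univ.image k).sup supNorm)) B with hCdef
  -- independence consequence
  have hind : ∀ b : Fin M → ℤ, b ≠ 0 → ∑ i, (b i : ℝ) * α i ≠ 0 := by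
    intro b hb h0
    apply hb
    have := Fintype.linearIndependent_iff.mp hα (fun i => (b i : ℚ))
    have hz : ∑ i, (b i : ℚ) • α i = 0 := by
      rw [← h0]
      refine Finset.sum_congr rfl fun i _ => ?_
      rw [Rat.smul_def]; push_cast; ring
    funext i
    have := this hz i
    exact_mod_cast this
  -- constraint set
  set F : Finset (Fin M → ℤ) :=
    (Fintype.piFinset fun _ : Fin M => Finset.Icc (-(C : ℤ)) (C : ℤ)).filter
      (fun b => b ≠ 0 ∧ 0 < ∑ i, (b i : ℝ) * α i) with hFdef
  set D : Finset (Fin M → ℤ) :=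
    Finset.univ.image (fun n : Fin N => fun i => k n.succ i - k n.castSucc i) with hDdef
  have hV : ∀ v ∈ F ∪ D, 0 < ∑ i, (v i : ℝ) * α i := by
    intro v hv
    rcases Finset.mem_union.mp hv with hv | hv
    · exact (Finset.mem_filter.mp hv).2.2
    · obtain ⟨n, -, rfl⟩ := Finset.mem_image.mp hv
      have := hk (Fin.castSucc_lt_succ : n.castSucc < n.succ)
      simp only [] at this
      have e : ∑ i, ((k n.succ i - k n.castSucc i : ℤ) : ℝ) * α i
          = (∑ i, (k n.succ i : ℝ) * α i) - ∑ i, (k n.castSucc i : ℝ) * α i := by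
        rw [← Finset.sum_sub_distrib]
        refine Finset.sum_congr rfl fun i _ => ?_
        push_cast; ring
      rw [e]
      linarith
  obtain ⟨a, ha⟩ := helper_pos α (F ∪ D) hV
  -- main bound
  have hmain : ∀ b : Fin M → ℤ, b ≠ 0 → (∑ i, b i * a i) = 0 → C < supNorm b := by
    intro b hb h0
    by_contra hle
    push_neg at hle
    have hmem : ∀ (c : Fin M → ℤ), (∀ i, (c i).natAbs ≤ C) →
        c ∈ Fintype.piFinset fun _ : Fin M => Finset.Icc (-(C : ℤ)) (C : ℤ) := by
      intro c hc
      rw [Fintype.mem_piFinset]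
      intro i
      rw [Finset.mem_Icc]
      have := hc i
      omega
    simp only [supNorm, Finset.sup_le_iff, Finset.mem_univ, forall_true_left] at hle
    have hball : ∀ i, (b i).natAbs ≤ C := hle
    rcases lt_trichotomy (∑ i, (b i : ℝ) * α i) 0 with hlt | heq | hgt
    · -- use -b
      have hmemF : (-b) ∈ F := by
        rw [hFdef, Finset.mem_filter]
        refine ⟨hmem _ fun i => by simpa using hball i, ?_, ?_⟩
        · simpa using hb
        · have e : ∑ i, ((-b) i : ℝ) * α i = -∑ i, (b i : ℝ) * α i := by
            rw [← Finset.sum_neg_distrib]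
            refine Finset.sum_congr rfl fun i _ => ?_
            simp only [Pi.neg_apply]; push_cast; ring
          rw [e]; linarith
      have := ha _ (Finset.mem_union_left _ hmemF)
      have e : ∑ i, (-b) i * a i = -∑ i, b i * a i := by
        rw [← Finset.sum_neg_distrib]
        exact Finset.sum_congr rfl fun i _ => by simp only [Pi.neg_apply]; ring
      rw [e, h0] at this
      omega
    · exact hind b hb heq
    · have hmemF : b ∈ F := by
        rw [hFdef, Finset.mem_filter]
        exact ⟨hmem _ hball, hb, hgt⟩
      have := ha _ (Finset.mem_union_left _ hmemF)
      omega
  refine ⟨a, ⟨fun b hb h0 => lt_of_le_of_lt (le_max_left _ _) (hmain b hb h0), ?_⟩,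
    fun b hb h0 => lt_of_le_of_lt (le_max_right _ _) (hmain b hb h0)⟩
  rw [Fin.strictMono_iff_lt_succ]
  intro n
  have hmemD : (fun i => k n.succ i - k n.castSucc i) ∈ D :=
    Finset.mem_image.mpr ⟨n, Finset.mem_univ n, rfl⟩
  have := ha _ (Finset.mem_union_right _ hmemD)
  have e : ∑ i, (k n.succ i - k n.castSucc i) * a i
      = (∑ i, k n.succ i * a i) - ∑ i, k n.castSucc i * a i := by
    rw [← Finset.sum_sub_distrib]
    exact Finset.sum_congr rfl fun i _ => by ring
  rw [e] at this
  show (∑ i, k n.castSucc i * a i) < ∑ i, k n.succ i * a i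
  omega
end
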